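/- For every integer n ≥ 1, the group SL(n+1, ℝ) acts on ℝ^{n+1} × (ℝ^{n+1})* by A·(v, φ) := (A v, φ ∘ A⁻¹), and this action is transitive on the set {(v, φ) : φ(v) = −1}; moreover, the stabilizer of any point of this set is isomorphic as a group to SL(n, ℝ). (This realizes the quadric {z ∈ ℝ_τ^{n+1} : q(z, z) = −1}, a principal bundle over the para-complex hyperbolic space ℍ_τ^n, as the homogeneous space SL(n+1, ℝ)/SL(n, ℝ).) -/

import Mathlib

open Matrix

namespace QuadricAux

noncomputable section

variable {n : ℕ}

/-- standard base point vector -/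
def e0 (n : ℕ) : Fin (n+1) → ℝ := fun i => if i = 0 then 1 else 0

def eqv (n : ℕ) : Fin 1 ⊕ Fin n ≃ Fin (n+1) :=
  finSumFinEquiv.trans (finCongr (Nat.add_comm 1 n))

lemma eqv_inl : eqv n (Sum.inl 0) = 0 := by
  simp [eqv, finSumFinEquiv]
  rfl

lemma eqv_inr (i : Fin n) : eqv n (Sum.inr i) = i.succ := by
  apply Fin.ext
  simp [eqv, finSumFinEquiv]
  try omega

lemma eqv_symm_zero : (eqv n).symm 0 = Sum.inl 0 := by
  rw [Equiv.symm_apply_eq, eqv_inl]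

lemma eqv_symm_succ (i : Fin n) : (eqv n).symm i.succ = Sum.inr i := by
  rw [Equiv.symm_apply_eq, eqv_inr]

/-- block embedding of matrices -/
def Emat (B : Matrix (Fin n) (Fin n) ℝ) : Matrix (Fin (n+1)) (Fin (n+1)) ℝ :=
  Matrix.reindex (eqv n) (eqv n) (Matrix.fromBlocks 1 0 0 B)

lemma Emat_succ_succ (B : Matrix (Fin n) (Fin n) ℝ) (i j : Fin n) :
    Emat B i.succ j.succ = B i j := by
  simp [Emat, reindex_apply, submatrix_apply, eqv_symm_succ]

lemma Emat_col_zero (B : Matrix (Fin n) (Fin n) ℝ) (i : Fin (n+1)) :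
    Emat B i 0 = if i = 0 then 1 else 0 := by
  induction i using Fin.cases with
  | zero => simp [Emat, reindex_apply, submatrix_apply, eqv_symm_zero]
  | succ i =>
    simp [Emat, reindex_apply, submatrix_apply, eqv_symm_zero, eqv_symm_succ,
      (Fin.succ_ne_zero i)]

lemma Emat_row_zero (B : Matrix (Fin n) (Fin n) ℝ) (j : Fin (n+1)) :
    Emat B 0 j = if j = 0 then 1 else 0 := by
  induction j using Fin.cases with
  | zero => simp [Emat, reindex_apply, submatrix_apply, eqv_symm_zero]
  | succ j =>
    simp [Emat, reindex_apply, submatrix_apply, eqv_symm_zero, eqv_symm_succ,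
      (Fin.succ_ne_zero j)]

lemma Emat_det (B : Matrix (Fin n) (Fin n) ℝ) : (Emat B).det = B.det := by
  simp [Emat, det_fromBlocks_zero₂₁]

lemma Emat_mul (B C : Matrix (Fin n) (Fin n) ℝ) : Emat B * Emat C = Emat (B * C) := by
  simp [Emat, reindex_apply, submatrix_mul_equiv, fromBlocks_multiply]

lemma Emat_injective : Function.Injective (Emat (n := n)) := by
  intro B C h
  ext i j
  have := congrArg (fun M => M i.succ j.succ) h
  simpa [Emat_succ_succ] using this

lemma Emat_mulVec_e0 (B : Matrix (Fin n) (Fin n) ℝ) : (Emat B).mulVec (e0 n) = e0 n := by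
  ext i
  simp only [mulVec, dotProduct, e0, mul_ite, mul_one, mul_zero]
  rw [Finset.sum_ite_eq' _ (0 : Fin (n+1))]
  simp [Emat_col_zero]

lemma Emat_mulVec_apply_zero (B : Matrix (Fin n) (Fin n) ℝ) (x : Fin (n+1) → ℝ) :
    (Emat B).mulVec x 0 = x 0 := by
  simp only [mulVec, dotProduct, Emat_row_zero]
  simp [Finset.sum_ite_eq]

end

end QuadricAux

namespace QuadricAux

open Matrix

noncomputable section
variable {n : ℕ}

lemma mulVec_e0 (M : Matrix (Fin (n+1)) (Fin (n+1)) ℝ) :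
    M.mulVec (e0 n) = fun i => M i 0 := by
  ext i
  simp only [mulVec, dotProduct, e0, mul_ite, mul_one, mul_zero]
  rw [Finset.sum_ite_eq' _ (0 : Fin (n+1))]
  simp

abbrev SL (k : ℕ) := Matrix.SpecialLinearGroup (Fin k) ℝ

lemma SL_inv_coe_mul (A : SL (n+1)) :
    ((A⁻¹ : SL (n+1)) : Matrix (Fin (n+1)) (Fin (n+1)) ℝ) * A = 1 := by
  rw [← Matrix.SpecialLinearGroup.coe_mul, inv_mul_cancel,
    Matrix.SpecialLinearGroup.coe_one]

lemma SL_coe_mul_inv (A : SL (n+1)) :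
    (A : Matrix (Fin (n+1)) (Fin (n+1)) ℝ) * (A⁻¹ : SL (n+1)) = 1 := by
  rw [← Matrix.SpecialLinearGroup.coe_mul, mul_inv_cancel,
    Matrix.SpecialLinearGroup.coe_one]

lemma SL_inv_mulVec_mulVec (A : SL (n+1)) (x : Fin (n+1) → ℝ) :
    ((A⁻¹ : SL (n+1)) : Matrix (Fin (n+1)) (Fin (n+1)) ℝ).mulVec
      ((A : Matrix (Fin (n+1)) (Fin (n+1)) ℝ).mulVec x) = x := by
  rw [mulVec_mulVec, SL_inv_coe_mul, one_mulVec]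

lemma SL_mulVec_inv_mulVec (A : SL (n+1)) (x : Fin (n+1) → ℝ) :
    (A : Matrix (Fin (n+1)) (Fin (n+1)) ℝ).mulVec
      (((A⁻¹ : SL (n+1)) : Matrix (Fin (n+1)) (Fin (n+1)) ℝ).mulVec x) = x := by
  rw [mulVec_mulVec, SL_coe_mul_inv, one_mulVec]

lemma exists_frame (n : ℕ) (hn : 1 ≤ n) (v : Fin (n+1) → ℝ)
    (φ : (Fin (n+1) → ℝ) →ₗ[ℝ] ℝ) (hv : φ v = -1) :
    ∃ M : SL (n+1),
      (M : Matrix (Fin (n+1)) (Fin (n+1)) ℝ).mulVec (e0 n) = v ∧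
      ∀ x, φ ((M : Matrix (Fin (n+1)) (Fin (n+1)) ℝ).mulVec x) = -(x 0) := by
  classical
  have h01 : (0 : Fin (n+1)) ≠ 1 := by
    have h1 : (1 : Fin (n+1)).val = 1 % (n+1) := Fin.val_one' (n+1)
    simp only [Ne, Fin.ext_iff, Fin.val_zero, h1]
    rw [Nat.mod_eq_of_lt (by omega)]
    omega
  -- the kernel of φ has dimension n
  have hrange : LinearMap.range φ = ⊤ := by
    rw [LinearMap.range_eq_top]
    intro c
    exact ⟨(-c) • v, by simp [hv]⟩
  have hker : Module.finrank ℝ (LinearMap.ker φ) = n := by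
    have h1 := LinearMap.finrank_range_add_finrank_ker φ
    rw [hrange, finrank_top, Module.finrank_self] at h1
    have h2 : Module.finrank ℝ (Fin (n+1) → ℝ) = n + 1 := by
      simp [Module.finrank_pi]
    omega
  set w : Module.Basis (Fin n) ℝ (LinearMap.ker φ) :=
    Module.finBasisOfFinrankEq ℝ (LinearMap.ker φ) hker with hw
  have hli : ∀ (c : ℝ), ∀ x ∈ LinearMap.ker φ, c • v + x = 0 → c = 0 := by
    intro c x hx h
    have := congrArg φ h
    rw [map_add, _root_.map_smul, hv, LinearMap.mem_ker.mp hx, map_zero] at this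
    simp only [smul_eq_mul, mul_neg_one] at this
    linarith
  have hsp : ∀ z : Fin (n+1) → ℝ, ∃ c : ℝ, z + c • v ∈ LinearMap.ker φ := by
    intro z
    refine ⟨φ z, ?_⟩
    rw [LinearMap.mem_ker, map_add, _root_.map_smul, hv]
    simp
  set b : Module.Basis (Fin (n+1)) ℝ (Fin (n+1) → ℝ) := Module.Basis.mkFinCons v w hli hsp with hbdef
  have hb : ⇑b = Fin.cons v ((↑) ∘ w) := Module.Basis.coe_mkFinCons v w hli hsp
  have hb0 : b 0 = v := by rw [hb]; rfl
  have hbsucc : ∀ i : Fin n, φ (b i.succ) = 0 := by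
    intro i
    rw [hb]
    show φ ((Fin.cons v ((↑) ∘ w) : Fin (n+1) → _) i.succ) = 0
    rw [Fin.cons_succ]
    exact LinearMap.mem_ker.mp (w i).2
  set M₀ : Matrix (Fin (n+1)) (Fin (n+1)) ℝ := (Pi.basisFun ℝ (Fin (n+1))).toMatrix ⇑b
    with hM₀def
  have hM₀ : ∀ i j, M₀ i j = b j i := by
    intro i j
    rw [hM₀def, Module.Basis.toMatrix_apply, Pi.basisFun_repr]
  have hunit : M₀ * (b.toMatrix (Pi.basisFun ℝ (Fin (n+1)))) = 1 :=
    Module.Basis.toMatrix_mul_toMatrix_flip _ _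
  set d : ℝ := M₀.det with hddef
  have hd : d * (b.toMatrix (Pi.basisFun ℝ (Fin (n+1)))).det = 1 := by
    rw [hddef, ← det_mul, hunit, det_one]
  have hd0 : d ≠ 0 := left_ne_zero_of_mul_eq_one hd
  set M₁ : Matrix (Fin (n+1)) (Fin (n+1)) ℝ :=
    M₀ * diagonal (fun j => if j = (1 : Fin (n+1)) then d⁻¹ else 1) with hM₁def
  have hdet : M₁.det = 1 := by
    rw [hM₁def, det_mul, det_diagonal, Finset.prod_ite_eq' Finset.univ (1 : Fin (n+1))
      (fun _ => d⁻¹)]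
    simp [mul_inv_cancel₀ hd0, ← hddef]
  have hcolfun : ∀ j, (fun i => M₁ i j) = (if j = 1 then d⁻¹ else 1) • ⇑b j := by
    intro j
    ext i
    rw [hM₁def, mul_diagonal, hM₀ i j]
    simp [mul_comm]
  have hcol : ∀ j, φ (fun i => M₁ i j) = if j = 0 then -1 else 0 := by
    intro j
    rw [hcolfun, _root_.map_smul]
    induction j using Fin.cases with
    | zero => rw [hb0, hv]; rw [if_neg h01]; simp
    | succ i => rw [hbsucc i]; simp [Fin.succ_ne_zero i]
  refine ⟨⟨M₁, hdet⟩, ?_, ?_⟩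
  · show M₁.mulVec (e0 n) = v
    rw [mulVec_e0, hcolfun 0, if_neg h01, one_smul, hb0]
  · intro x
    show φ (M₁.mulVec x) = -(x 0)
    have hx : M₁.mulVec x = ∑ j, x j • (fun i => M₁ i j) := by
      ext i
      simp [mulVec, dotProduct, Finset.sum_apply, mul_comm]
    rw [hx, map_sum]
    simp only [_root_.map_smul, hcol, smul_eq_mul, mul_ite, mul_neg_one, mul_zero]
    rw [Finset.sum_ite_eq' Finset.univ (0 : Fin (n+1)) (fun j => -(x j))]
    simp

end
end QuadricAux

open QuadricAux

/-- `SL(n+1, ℝ)` acts on pairs of a vector and a linear functional by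
`A·(v, φ) = (Av, φ ∘ A⁻¹)`; this action is transitive on the set
`{(v, φ) : φ(v) = −1}` (the quadric `{q(z,z) = −1}` over the para-complex numbers),
and the stabilizer of any point of this set is isomorphic as a group to `SL(n, ℝ)`. -/
theorem quadric_homogeneous_space (n : ℕ) (hn : 1 ≤ n) :
    -- transitivity on `{(v, φ) : φ(v) = −1}`
    (∀ p p' : (Fin (n + 1) → ℝ) × ((Fin (n + 1) → ℝ) →ₗ[ℝ] ℝ),
      p.2 p.1 = -1 → p'.2 p'.1 = -1 →
      ∃ A : Matrix.SpecialLinearGroup (Fin (n + 1)) ℝ,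
        (A : Matrix (Fin (n + 1)) (Fin (n + 1)) ℝ).mulVec p.1 = p'.1 ∧
        ∀ x : Fin (n + 1) → ℝ,
          p.2 (((A⁻¹ : Matrix.SpecialLinearGroup (Fin (n + 1)) ℝ) :
            Matrix (Fin (n + 1)) (Fin (n + 1)) ℝ).mulVec x) = p'.2 x) ∧
    -- the stabilizer of any point is isomorphic to `SL(n, ℝ)`
    (∀ v : Fin (n + 1) → ℝ, ∀ φ : (Fin (n + 1) → ℝ) →ₗ[ℝ] ℝ, φ v = -1 →
      ∃ f : Matrix.SpecialLinearGroup (Fin n) ℝ →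
          Matrix.SpecialLinearGroup (Fin (n + 1)) ℝ,
        Function.Injective f ∧
        (∀ B C : Matrix.SpecialLinearGroup (Fin n) ℝ, f (B * C) = f B * f C) ∧
        (∀ B : Matrix.SpecialLinearGroup (Fin n) ℝ,
          ((f B : Matrix (Fin (n + 1)) (Fin (n + 1)) ℝ).mulVec v = v ∧
            ∀ x : Fin (n + 1) → ℝ,
              φ ((((f B)⁻¹ : Matrix.SpecialLinearGroup (Fin (n + 1)) ℝ) :
                Matrix (Fin (n + 1)) (Fin (n + 1)) ℝ).mulVec x) = φ x)) ∧
        (∀ A : Matrix.SpecialLinearGroup (Fin (n + 1)) ℝ,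
          ((A : Matrix (Fin (n + 1)) (Fin (n + 1)) ℝ).mulVec v = v ∧
            ∀ x : Fin (n + 1) → ℝ,
              φ (((A⁻¹ : Matrix.SpecialLinearGroup (Fin (n + 1)) ℝ) :
                Matrix (Fin (n + 1)) (Fin (n + 1)) ℝ).mulVec x) = φ x) →
          ∃ B, f B = A)) := by
  constructor
  · -- transitivity
    rintro ⟨v1, φ1⟩ ⟨v2, φ2⟩ h1 h2
    obtain ⟨M1, hM1v, hM1φ⟩ := exists_frame n hn v1 φ1 h1
    obtain ⟨M2, hM2v, hM2φ⟩ := exists_frame n hn v2 φ2 h2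
    refine ⟨M2 * M1⁻¹, ?_, ?_⟩
    · show ((M2 * M1⁻¹ : SL (n+1)) : Matrix _ _ ℝ).mulVec v1 = v2
      rw [Matrix.SpecialLinearGroup.coe_mul, ← mulVec_mulVec]
      rw [← hM1v, SL_inv_mulVec_mulVec, hM2v]
    · intro x
      show φ1 ((((M2 * M1⁻¹)⁻¹ : SL (n+1)) : Matrix _ _ ℝ).mulVec x) = φ2 x
      have hinv : (M2 * M1⁻¹)⁻¹ = M1 * M2⁻¹ := by
        rw [_root_.mul_inv_rev, inv_inv]
      rw [hinv, Matrix.SpecialLinearGroup.coe_mul, ← mulVec_mulVec, hM1φ]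
      have := hM2φ (((M2⁻¹ : SL (n+1)) : Matrix _ _ ℝ).mulVec x)
      rw [SL_mulVec_inv_mulVec] at this
      rw [← this]
  · -- stabilizer
    intro v φ hv
    obtain ⟨M, hMv, hMφ⟩ := exists_frame n hn v φ hv
    set ESL : SL n → SL (n+1) :=
      fun B => ⟨Emat (B : Matrix (Fin n) (Fin n) ℝ), by rw [Emat_det]; exact B.2⟩
      with hESLdef
    have hESLcoe : ∀ B : SL n, (ESL B : Matrix (Fin (n+1)) (Fin (n+1)) ℝ)
        = Emat (B : Matrix (Fin n) (Fin n) ℝ) := fun B => rfl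
    have hESLmul : ∀ B C : SL n, ESL (B * C) = ESL B * ESL C := by
      intro B C
      apply Subtype.ext
      rw [Matrix.SpecialLinearGroup.coe_mul, hESLcoe, hESLcoe, hESLcoe, Emat_mul,
        Matrix.SpecialLinearGroup.coe_mul]
    have hESLone : ESL 1 = 1 := by
      apply Subtype.ext
      rw [hESLcoe, Matrix.SpecialLinearGroup.coe_one]
      ext i j
      induction i using Fin.cases with
      | zero =>
        rw [Emat_row_zero]
        simp [Matrix.one_apply, eq_comm]
      | succ i =>
        induction j using Fin.cases with
        | zero =>
          rw [Emat_col_zero]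
          simp [Matrix.one_apply, Fin.succ_ne_zero i]
        | succ j =>
          rw [Emat_succ_succ]
          simp [Matrix.one_apply, Fin.succ_inj]
    have hESLinv : ∀ B : SL n, (ESL B)⁻¹ = ESL B⁻¹ := by
      intro B
      apply inv_eq_of_mul_eq_one_right
      rw [← hESLmul, mul_inv_cancel, hESLone]
    have hESLinj : Function.Injective ESL := by
      intro B C h
      apply Subtype.ext
      apply Emat_injective
      rw [← hESLcoe, ← hESLcoe, h]
    refine ⟨fun B => M * ESL B * M⁻¹, ?_, ?_, ?_, ?_⟩
    · intro B C h
      dsimp only at h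
      apply hESLinj
      have h1 : ESL B = M⁻¹ * (M * ESL B * M⁻¹) * M := by group
      rw [h1, h]
      group
    · intro B C
      dsimp only
      rw [hESLmul]
      group
    · intro B
      constructor
      · show ((M * ESL B * M⁻¹ : SL (n+1)) : Matrix _ _ ℝ).mulVec v = v
        rw [Matrix.SpecialLinearGroup.coe_mul, Matrix.SpecialLinearGroup.coe_mul,
          ← mulVec_mulVec, ← mulVec_mulVec]
        rw [← hMv, SL_inv_mulVec_mulVec, hESLcoe, Emat_mulVec_e0, hMv]
      · intro x
        have hfinv : (M * ESL B * M⁻¹)⁻¹ = M * ESL B⁻¹ * M⁻¹ := by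
          rw [← hESLinv]
          group
        show φ ((((M * ESL B * M⁻¹)⁻¹ : SL (n+1)) : Matrix _ _ ℝ).mulVec x) = φ x
        rw [hfinv, Matrix.SpecialLinearGroup.coe_mul, Matrix.SpecialLinearGroup.coe_mul,
          ← mulVec_mulVec, ← mulVec_mulVec, hMφ, hESLcoe, Emat_mulVec_apply_zero]
        have := hMφ (((M⁻¹ : SL (n+1)) : Matrix _ _ ℝ).mulVec x)
        rw [SL_mulVec_inv_mulVec] at this
        rw [← this]
    · rintro A ⟨hAv, hAφ⟩
      set G : SL (n+1) := M⁻¹ * A * M with hGdef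
      have hGcoe : (G : Matrix (Fin (n+1)) (Fin (n+1)) ℝ)
          = ((M⁻¹ : SL (n+1)) : Matrix (Fin (n+1)) (Fin (n+1)) ℝ)
            * (A : Matrix (Fin (n+1)) (Fin (n+1)) ℝ)
            * (M : Matrix (Fin (n+1)) (Fin (n+1)) ℝ) := by
        rw [hGdef, Matrix.SpecialLinearGroup.coe_mul, Matrix.SpecialLinearGroup.coe_mul]
      have hG1 : (G : Matrix (Fin (n+1)) (Fin (n+1)) ℝ).mulVec (e0 n) = e0 n := by
        rw [hGcoe, ← mulVec_mulVec, ← mulVec_mulVec, hMv, hAv, ← hMv,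
          SL_inv_mulVec_mulVec]
      have hφA : ∀ y, φ ((A : Matrix (Fin (n+1)) (Fin (n+1)) ℝ).mulVec y) = φ y := by
        intro y
        have := hAφ ((A : Matrix (Fin (n+1)) (Fin (n+1)) ℝ).mulVec y)
        rw [SL_inv_mulVec_mulVec] at this
        exact this.symm
      have hMG : (M : Matrix (Fin (n+1)) (Fin (n+1)) ℝ) * G
          = (A : Matrix (Fin (n+1)) (Fin (n+1)) ℝ) * M := by
        rw [← Matrix.SpecialLinearGroup.coe_mul, ← Matrix.SpecialLinearGroup.coe_mul]
        congr 1
        rw [hGdef]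
        group
        rfl
      have hG0 : ∀ x, (G : Matrix (Fin (n+1)) (Fin (n+1)) ℝ).mulVec x 0 = x 0 := by
        intro x
        have h1 : (M : Matrix (Fin (n+1)) (Fin (n+1)) ℝ).mulVec
            ((G : Matrix (Fin (n+1)) (Fin (n+1)) ℝ).mulVec x)
            = (A : Matrix (Fin (n+1)) (Fin (n+1)) ℝ).mulVec
              ((M : Matrix (Fin (n+1)) (Fin (n+1)) ℝ).mulVec x) := by
          rw [mulVec_mulVec, mulVec_mulVec, hMG]
        have h2 := hMφ ((G : Matrix (Fin (n+1)) (Fin (n+1)) ℝ).mulVec x)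
        rw [h1, hφA, hMφ] at h2
        linarith
      have hGc : ∀ i, (G : Matrix (Fin (n+1)) (Fin (n+1)) ℝ) i 0
          = if i = 0 then 1 else 0 := by
        intro i
        have h1 := congrFun hG1 i
        rw [mulVec_e0] at h1
        simp only at h1
        rw [h1]
        rfl
      have hGr : ∀ j, (G : Matrix (Fin (n+1)) (Fin (n+1)) ℝ) 0 j
          = if j = 0 then 1 else 0 := by
        intro j
        have := hG0 (fun k => if k = j then 1 else 0)
        simp only [mulVec, dotProduct, mul_ite, mul_one, mul_zero] at this
        rw [Finset.sum_ite_eq' Finset.univ j] at this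
        simp only [Finset.mem_univ, if_true] at this
        rw [this]
        simp [eq_comm]
      set B : Matrix (Fin n) (Fin n) ℝ :=
        Matrix.of fun i j => (G : Matrix (Fin (n+1)) (Fin (n+1)) ℝ) i.succ j.succ
        with hBdef
      have hEB : Emat B = (G : Matrix (Fin (n+1)) (Fin (n+1)) ℝ) := by
        ext i j
        induction i using Fin.cases with
        | zero =>
          rw [Emat_row_zero, hGr]
        | succ i =>
          induction j using Fin.cases with
          | zero =>
            rw [Emat_col_zero, hGc]
          | succ j =>
            rw [Emat_succ_succ]
            rfl
      have hdetB : B.det = 1 := by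
        have := Emat_det B
        rw [hEB] at this
        rw [← this, G.2]
      refine ⟨⟨B, hdetB⟩, ?_⟩
      dsimp only
      have hESLG : ESL ⟨B, hdetB⟩ = G := by
        apply Subtype.ext
        show Emat B = _
        exact hEB
      rw [hESLG, hGdef]
      group
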